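/- For all sufficiently large n, any nontrivial symmetric Boolean function f:{0,1}^n→{0,1} has at least C(n, ⌈n/8⌉) nonzero Fourier coefficients, i.e., |{w ∈ {0,1}^n : f̃(w) ≠ 0}| ≥ C(n, ⌈n/8⌉). -/

import Mathlib

namespace SymXOR

/-- Hamming weight of a Boolean vector. -/
def hammingWeight {n : ℕ} (x : Fin n → Bool) : ℕ :=
  (Finset.univ.filter fun i => x i = true).card

/-- The inner product `x·w = Σ_i x_i w_i` of two Boolean vectors. -/
def dotProd {n : ℕ} (x w : Fin n → Bool) : ℕ :=
  (Finset.univ.filter fun i => x i = true ∧ w i = true).card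

/-- A Boolean value viewed as a real number. -/
noncomputable def boolToReal (b : Bool) : ℝ := if b then 1 else 0

/-- The Fourier coefficient `f̃(w) = 2^{-n} Σ_x (-1)^{x·w} f(x)`. -/
noncomputable def fourierCoeff {n : ℕ} (f : (Fin n → Bool) → Bool) (w : Fin n → Bool) : ℝ :=
  (1 / 2 ^ n) * ∑ x : Fin n → Bool, (-1 : ℝ) ^ dotProd x w * boolToReal (f x)

open Finset Polynomial

variable {n : ℕ}

lemma hammingWeight_le (x : Fin n → Bool) : hammingWeight x ≤ n := by
  simpa [hammingWeight] using (Finset.card_filter_le Finset.univ fun i => x i = true)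

lemma neg_one_pow_dot (x w : Fin n → Bool) :
    (-1 : ℝ) ^ dotProd x w = ∏ i, (if x i = true ∧ w i = true then (-1 : ℝ) else 1) := by
  rw [Finset.prod_ite, Finset.prod_const, Finset.prod_const, one_pow, mul_one, dotProd]

lemma orth (x y : Fin n → Bool) :
    ∑ w : Fin n → Bool, (-1 : ℝ) ^ dotProd x w * (-1 : ℝ) ^ dotProd y w
      = if x = y then (2 : ℝ) ^ n else 0 := by
  have h : ∀ w : Fin n → Bool, (-1 : ℝ) ^ dotProd x w * (-1 : ℝ) ^ dotProd y w
      = ∏ i, ((if x i = true ∧ w i = true then (-1 : ℝ) else 1) *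
              (if y i = true ∧ w i = true then (-1 : ℝ) else 1)) := by
    intro w
    rw [neg_one_pow_dot, neg_one_pow_dot, Finset.prod_mul_distrib]
  simp only [h]
  rw [show (∑ w : Fin n → Bool, ∏ i, ((if x i = true ∧ w i = true then (-1 : ℝ) else 1) *
              (if y i = true ∧ w i = true then (-1 : ℝ) else 1)))
      = ∏ i, ∑ b : Bool, ((if x i = true ∧ b = true then (-1 : ℝ) else 1) *
              (if y i = true ∧ b = true then (-1 : ℝ) else 1)) from ?_]
  · by_cases hxy : x = y
    · subst hxy
      simp only [if_pos rfl]
      have h2 : ∀ i : Fin n, (∑ b : Bool, ((if x i = true ∧ b = true then (-1 : ℝ) else 1) *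
              (if x i = true ∧ b = true then (-1 : ℝ) else 1))) = 2 := by
        intro i
        rcases Bool.dichotomy (x i) with h | h <;> simp [h, Fintype.sum_bool] <;> norm_num
      rw [Finset.prod_congr rfl (fun i _ => h2 i), Finset.prod_const, Finset.card_univ,
        Fintype.card_fin]
      simp
    · rw [if_neg hxy]
      obtain ⟨i, hi⟩ : ∃ i, x i ≠ y i := by
        by_contra hc; push_neg at hc; exact hxy (funext hc)
      apply Finset.prod_eq_zero (Finset.mem_univ i)
      rcases Bool.dichotomy (x i) with h | h <;> rcases Bool.dichotomy (y i) with h' | h' <;>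
        simp [h, h'] at hi ⊢ <;> norm_num
  · rw [Finset.prod_univ_sum]
    apply Fintype.sum_equiv (Equiv.refl _)
    intro w
    rfl

lemma inversion (f : (Fin n → Bool) → Bool) (x : Fin n → Bool) :
    ∑ w : Fin n → Bool, fourierCoeff f w * (-1 : ℝ) ^ dotProd x w = boolToReal (f x) := by
  unfold fourierCoeff
  simp_rw [mul_assoc, ← Finset.mul_sum, Finset.sum_mul, mul_assoc,
    mul_comm (boolToReal (f _)) ((-1:ℝ) ^ dotProd x _), ← mul_assoc]
  rw [Finset.sum_comm]
  simp_rw [mul_comm ((-1:ℝ) ^ dotProd _ _ * (-1:ℝ) ^ dotProd x _) (boolToReal (f _)),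
    ← Finset.mul_sum, orth, mul_ite, mul_zero]
  rw [Finset.sum_ite_eq' Finset.univ x (fun y => boolToReal (f y) * 2 ^ n)]
  simp only [Finset.mem_univ, if_pos]
  field_simp

lemma card_weight_eq (j : ℕ) :
    ((Finset.univ : Finset (Fin n → Bool)).filter fun w => hammingWeight w = j).card
      = n.choose j := by
  have h : ((Finset.univ : Finset (Fin n → Bool)).filter fun w => hammingWeight w = j).card
      = (Finset.powersetCard j (Finset.univ : Finset (Fin n))).card := by
    apply Finset.card_nbij' (i := fun w => Finset.univ.filter fun i => w i = true)
      (j := fun A i => decide (i ∈ A))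
    · intro w hw
      simp only [Finset.mem_coe, Finset.mem_filter, Finset.mem_univ, true_and] at hw
      simp [Finset.mem_powersetCard_univ, ← hw, hammingWeight]
    · intro A hA
      simp only [Finset.mem_coe, Finset.mem_powersetCard_univ] at hA
      simp only [Finset.mem_coe, Finset.mem_filter, Finset.mem_univ, true_and, hammingWeight, ← hA]
      congr 1
      ext i
      simp
    · intro w hw
      funext i
      simp
    · intro A hA
      ext i
      simp
  rw [h, Finset.card_powersetCard, Finset.card_univ, Fintype.card_fin]

lemma sum_by_weight (h : ℕ → ℝ) :
    ∑ w : Fin n → Bool, h (hammingWeight w)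
      = ∑ j ∈ Finset.range (n + 1), (n.choose j : ℝ) * h j := by
  rw [← Finset.sum_fiberwise_of_maps_to (g := fun w : Fin n → Bool => hammingWeight w)
    (t := Finset.range (n + 1)) (fun w _ => Finset.mem_range.mpr (Nat.lt_succ_of_le
      (hammingWeight_le w)))]
  apply Finset.sum_congr rfl
  intro j _
  rw [Finset.sum_congr rfl (fun w hw => by
    simp only [Finset.mem_filter] at hw
    rw [hw.2]), Finset.sum_const, card_weight_eq, nsmul_eq_mul]

lemma card_filter_comp (p : Fin n → Prop) [DecidablePred p] (σ : Equiv.Perm (Fin n)) :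
    ((Finset.univ : Finset (Fin n)).filter fun i => p (σ i)).card
      = ((Finset.univ : Finset (Fin n)).filter p).card := by
  apply Finset.card_equiv σ
  intro i
  simp

lemma hammingWeight_comp (x : Fin n → Bool) (σ : Equiv.Perm (Fin n)) :
    hammingWeight (x ∘ σ) = hammingWeight x := by
  have := card_filter_comp (fun j => x j = true) σ
  simpa [hammingWeight, Function.comp] using this

lemma dotProd_comp (x w : Fin n → Bool) (σ : Equiv.Perm (Fin n)) :
    dotProd (x ∘ σ) (w ∘ σ) = dotProd x w := by
  have := card_filter_comp (fun j => x j = true ∧ w j = true) σ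
  simpa [dotProd, Function.comp] using this

lemma dotProd_comp' (x w : Fin n → Bool) (σ : Equiv.Perm (Fin n)) :
    dotProd (x ∘ σ.symm) w = dotProd x (w ∘ σ) := by
  rw [← dotProd_comp (x ∘ σ.symm) w σ]
  congr 1
  funext i
  simp

lemma fourierCoeff_comp_perm (f : (Fin n → Bool) → Bool)
    (hf : ∀ x y, hammingWeight x = hammingWeight y → f x = f y)
    (w : Fin n → Bool) (σ : Equiv.Perm (Fin n)) :
    fourierCoeff f (w ∘ σ) = fourierCoeff f w := by
  unfold fourierCoeff
  congr 1
  apply Fintype.sum_equiv (Equiv.arrowCongr σ (Equiv.refl Bool))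
  intro x
  have e1 : (Equiv.arrowCongr σ (Equiv.refl Bool)) x = x ∘ σ.symm := rfl
  rw [e1, ← dotProd_comp' x w σ, hf (x ∘ σ.symm) x (hammingWeight_comp x σ.symm)]

lemma exists_perm (w w' : Fin n → Bool) (h : hammingWeight w = hammingWeight w') :
    ∃ σ : Equiv.Perm (Fin n), w ∘ σ = w' := by
  classical
  have hc1 : Fintype.card {i : Fin n // w' i = true} = Fintype.card {i : Fin n // w i = true} := by
    rw [Fintype.card_subtype, Fintype.card_subtype]
    exact h.symm
  have hc2 : Fintype.card {i : Fin n // ¬ (w' i = true)}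
      = Fintype.card {i : Fin n // ¬ (w i = true)} := by
    rw [Fintype.card_subtype_compl, Fintype.card_subtype_compl, hc1]
  let e₁ := Fintype.equivOfCardEq hc1
  let e₂ := Fintype.equivOfCardEq hc2
  refine ⟨(Equiv.sumCompl (fun i => w' i = true)).symm.trans
    ((e₁.sumCongr e₂).trans (Equiv.sumCompl fun i => w i = true)), funext fun i => ?_⟩
  by_cases hi : w' i = true
  · rw [Function.comp_apply, Equiv.trans_apply, Equiv.trans_apply,
      Equiv.sumCompl_symm_apply_of_pos (p := fun j => w' j = true) hi, Equiv.sumCongr_apply, Sum.map_inl,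
      Equiv.sumCompl_apply_inl, hi]
    exact (e₁ ⟨i, hi⟩).2
  · rw [Function.comp_apply, Equiv.trans_apply, Equiv.trans_apply,
      Equiv.sumCompl_symm_apply_of_neg (p := fun j => w' j = true) hi, Equiv.sumCongr_apply, Sum.map_inr,
      Equiv.sumCompl_apply_inr]
    have := (e₂ ⟨i, hi⟩).2
    simp only [Bool.not_eq_true] at this hi ⊢
    rw [this, hi]

lemma fourierCoeff_eq_of_weight_eq (f : (Fin n → Bool) → Bool)
    (hf : ∀ x y, hammingWeight x = hammingWeight y → f x = f y)
    (w w' : Fin n → Bool) (h : hammingWeight w = hammingWeight w') :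
    fourierCoeff f w = fourierCoeff f w' := by
  obtain ⟨σ, hσ⟩ := exists_perm w w' h
  rw [← hσ, fourierCoeff_comp_perm f hf w σ]

def xvec (n m : ℕ) : Fin n → Bool := fun i => decide ((i : ℕ) < m)

lemma card_filter_lt (m : ℕ) (hm : m ≤ n) :
    (Finset.univ.filter fun i : Fin n => (i : ℕ) < m).card = m := by
  have h : (Finset.univ.filter fun i : Fin n => (i : ℕ) < m)
      = (Finset.range m).attachFin
        (fun x hx => lt_of_lt_of_le (Finset.mem_range.mp hx) hm) := by
    ext i
    simp [Finset.mem_attachFin]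
  rw [h, Finset.card_attachFin, Finset.card_range]

lemma hammingWeight_xvec (m : ℕ) (hm : m ≤ n) : hammingWeight (xvec n m) = m := by
  unfold hammingWeight xvec
  simp only [decide_eq_true_eq]
  exact card_filter_lt m hm

noncomputable def kraw (n k m : ℕ) : ℝ :=
  ∑ w ∈ (Finset.univ.filter fun w : Fin n → Bool => hammingWeight w = k),
    (-1 : ℝ) ^ dotProd (xvec n m) w

lemma decomp (f : (Fin n → Bool) → Bool)
    (hf : ∀ x y, hammingWeight x = hammingWeight y → f x = f y)
    (m : ℕ) (hm : m ≤ n) :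
    boolToReal (f (xvec n m))
      = ∑ j ∈ Finset.range (n + 1), fourierCoeff f (xvec n j) * kraw n j m := by
  rw [← inversion f (xvec n m),
    ← Finset.sum_fiberwise_of_maps_to (g := fun w : Fin n → Bool => hammingWeight w)
      (t := Finset.range (n + 1))
      (fun w _ => Finset.mem_range.mpr (Nat.lt_succ_of_le (hammingWeight_le w)))]
  apply Finset.sum_congr rfl
  intro j hj
  rw [kraw, Finset.mul_sum]
  apply Finset.sum_congr rfl
  intro w hw
  simp only [Finset.mem_filter] at hw
  rw [fourierCoeff_eq_of_weight_eq f hf w (xvec n j)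
    (by rw [hw.2, hammingWeight_xvec j (Nat.lt_succ_iff.mp (Finset.mem_range.mp hj))])]

lemma hammingWeight_not (x : Fin n → Bool) :
    hammingWeight (fun i => !(x i)) = n - hammingWeight x := by
  unfold hammingWeight
  have h : (Finset.univ.filter fun i : Fin n => (!(x i)) = true)
      = Finset.univ \ (Finset.univ.filter fun i => x i = true) := by
    ext i
    simp [Bool.not_eq_true']
  rw [h, Finset.card_sdiff_of_subset (Finset.filter_subset _ _), Finset.card_univ, Fintype.card_fin]

lemma dot_add_dot_not (x : Fin n → Bool) (m : ℕ) (hm : m ≤ n) :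
    dotProd (xvec n m) x + dotProd (xvec n m) (fun i => !(x i)) = m := by
  unfold dotProd
  rw [← Finset.card_union_of_disjoint]
  · have h : (Finset.univ.filter fun i : Fin n => xvec n m i = true ∧ x i = true)
        ∪ (Finset.univ.filter fun i : Fin n => xvec n m i = true ∧ (!(x i)) = true)
        = Finset.univ.filter fun i : Fin n => (i : ℕ) < m := by
      ext i
      rcases Bool.dichotomy (x i) with h | h <;> simp [h, xvec]
    rw [h, card_filter_lt m hm]
  · rw [Finset.disjoint_filter]
    intro i _ hi
    simp only [hi.2, Bool.not_true, Bool.false_eq_true, and_false, not_false_eq_true,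
      hi.1, true_and]

lemma kraw_compl (k m : ℕ) (hk : k ≤ n) (hm : m ≤ n) :
    kraw n (n - k) m = (-1 : ℝ) ^ m * kraw n k m := by
  unfold kraw
  rw [Finset.mul_sum]
  symm
  apply Finset.sum_nbij' (i := fun w : Fin n → Bool => fun i => !(w i))
    (j := fun w : Fin n → Bool => fun i => !(w i))
  · intro w hw
    simp only [Finset.mem_filter, Finset.mem_univ, true_and] at hw ⊢
    rw [hammingWeight_not, hw]
  · intro w hw
    simp only [Finset.mem_filter, Finset.mem_univ, true_and] at hw ⊢
    rw [hammingWeight_not, hw]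
    omega
  · intro w _
    funext i
    simp
  · intro w _
    funext i
    simp
  · intro w hw
    simp only [Finset.mem_filter, Finset.mem_univ, true_and] at hw
    have hsum := dot_add_dot_not w m hm
    set d := dotProd (xvec n m) w
    set d' := dotProd (xvec n m) (fun i => !(w i))
    have h1 : (-1 : ℝ) ^ m = (-1 : ℝ) ^ d * (-1 : ℝ) ^ d' := by
      rw [← pow_add, hsum]
    have hdd : (-1 : ℝ) ^ d * (-1 : ℝ) ^ d = 1 := by
      rw [← pow_add]
      exact Even.neg_one_pow ⟨d, rfl⟩
    calc (-1 : ℝ) ^ m * (-1 : ℝ) ^ d = (-1:ℝ)^d * (-1:ℝ)^d' * (-1:ℝ)^d := by rw [h1]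
    _ = ((-1:ℝ)^d * (-1:ℝ)^d) * (-1:ℝ)^d' := by ring
    _ = (-1:ℝ)^d' := by rw [hdd, one_mul]

lemma pow_card_filter {M : Type*} [CommMonoid M] (a : M) (p : Fin n → Prop)
    [DecidablePred p] :
    a ^ (Finset.univ.filter p).card = ∏ i, (if p i then a else 1) := by
  rw [Finset.prod_ite, Finset.prod_const, Finset.prod_const, one_pow, mul_one]

lemma gen_poly (m : ℕ) (hm : m ≤ n) :
    (∑ w : Fin n → Bool,
        Polynomial.C ((-1 : ℝ) ^ dotProd (xvec n m) w) * X ^ hammingWeight w)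
      = ((1 : ℝ[X]) - X) ^ m * ((1 : ℝ[X]) + X) ^ (n - m) := by
  have hterm : ∀ w : Fin n → Bool,
      Polynomial.C ((-1 : ℝ) ^ dotProd (xvec n m) w) * X ^ hammingWeight w
      = ∏ i, ((if xvec n m i = true ∧ w i = true then Polynomial.C (-1 : ℝ) else 1)
          * (if w i = true then (X : ℝ[X]) else 1)) := by
    intro w
    rw [Finset.prod_mul_distrib, map_pow]
    unfold dotProd hammingWeight
    rw [pow_card_filter (Polynomial.C (-1:ℝ)) (fun i => xvec n m i = true ∧ w i = true),
      pow_card_filter (X : ℝ[X]) (fun i => w i = true)]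
  simp only [hterm]
  rw [show (∑ w : Fin n → Bool, ∏ i,
      ((if xvec n m i = true ∧ w i = true then Polynomial.C (-1 : ℝ) else 1)
          * (if w i = true then (X : ℝ[X]) else 1)))
      = ∏ i, ∑ b : Bool, ((if xvec n m i = true ∧ b = true then Polynomial.C (-1 : ℝ) else 1)
          * (if b = true then (X : ℝ[X]) else 1)) from ?_]
  · have hfac : ∀ i : Fin n, (∑ b : Bool,
        ((if xvec n m i = true ∧ b = true then Polynomial.C (-1 : ℝ) else 1)
          * (if b = true then (X : ℝ[X]) else 1)))
        = if (i : ℕ) < m then 1 - X else 1 + X := by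
      intro i
      rcases Bool.dichotomy (xvec n m i) with h | h <;>
        · have : ((i:ℕ) < m) = (xvec n m i = true) := by simp [xvec]
          rw [Fintype.sum_bool]
          simp only [this, h]
          simp [map_neg, map_one]
          try ring
    rw [Finset.prod_congr rfl (fun i _ => hfac i), Finset.prod_ite, Finset.prod_const,
      Finset.prod_const, card_filter_lt m hm]
    congr 2
    rw [Finset.filter_not, Finset.card_sdiff_of_subset (Finset.filter_subset _ _), Finset.card_univ,
      Fintype.card_fin, card_filter_lt m hm]
  · rw [Finset.prod_univ_sum]
    apply Fintype.sum_equiv (Equiv.refl _)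
    intro w
    rfl

lemma coeff_one_sub_X_pow (m j : ℕ) :
    ((((1 : ℝ[X]) - X)) ^ m).coeff j = (-1 : ℝ) ^ j * m.choose j := by
  have h : ((1 : ℝ[X]) - X) ^ m = ∑ k ∈ Finset.range (m+1),
      Polynomial.C ((-1:ℝ)^k * m.choose k) * X ^ k := by
    rw [sub_eq_add_neg, add_comm, add_pow]
    apply Finset.sum_congr rfl
    intro k _
    rw [neg_pow, one_pow, mul_one, map_mul, map_pow, map_neg, map_one,
      Polynomial.C_eq_natCast]
    ring
  rw [h, Polynomial.finset_sum_coeff]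
  simp only [Polynomial.coeff_C_mul, Polynomial.coeff_X_pow, mul_ite, mul_one, mul_zero]
  rw [Finset.sum_ite_eq (Finset.range (m+1)) j (fun k => (-1:ℝ)^k * m.choose k)]
  by_cases hj : j < m + 1
  · rw [if_pos (Finset.mem_range.mpr hj)]
  · rw [if_neg (fun hc => hj (Finset.mem_range.mp hc)),
      Nat.choose_eq_zero_of_lt (by omega)]
    simp

lemma kraw_eq (k m : ℕ) (hm : m ≤ n) :
    kraw n k m = ∑ j ∈ Finset.range (k+1),
      (-1:ℝ)^j * m.choose j * ((n-m).choose (k-j)) := by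
  have h1 : kraw n k m = ((∑ w : Fin n → Bool,
      Polynomial.C ((-1 : ℝ) ^ dotProd (xvec n m) w) * X ^ hammingWeight w)).coeff k := by
    rw [Polynomial.finset_sum_coeff]
    simp only [Polynomial.coeff_C_mul, Polynomial.coeff_X_pow, mul_ite, mul_one, mul_zero]
    rw [kraw, Finset.sum_filter]
    apply Finset.sum_congr rfl
    intro w _
    by_cases hw : hammingWeight w = k
    · simp [hw]
    · rw [if_neg hw, if_neg (fun hc => hw hc.symm)]
  rw [h1, gen_poly m hm, Polynomial.coeff_mul,
    Finset.Nat.sum_antidiagonal_eq_sum_range_succ_mk]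
  apply Finset.sum_congr rfl
  intro j _
  rw [coeff_one_sub_X_pow, Polynomial.coeff_one_add_X_pow]

noncomputable def krawPoly (n k : ℕ) : ℝ[X] :=
  ∑ j ∈ Finset.range (k+1), Polynomial.C ((-1:ℝ)^j * (1 / (j.factorial * (k-j).factorial)))
    * descPochhammer ℝ j * (descPochhammer ℝ (k-j)).comp (Polynomial.C (n:ℝ) - X)

lemma krawPoly_natDegree_le (k : ℕ) : (krawPoly n k).natDegree ≤ k := by
  apply Polynomial.natDegree_sum_le_of_forall_le
  intro j hj
  have hj' : j ≤ k := Nat.lt_succ_iff.mp (Finset.mem_range.mp hj)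
  calc (Polynomial.C ((-1:ℝ)^j * (1 / (j.factorial * (k-j).factorial)))
        * descPochhammer ℝ j * (descPochhammer ℝ (k-j)).comp
          (Polynomial.C (n:ℝ) - X)).natDegree
      ≤ (Polynomial.C ((-1:ℝ)^j * (1 / (j.factorial * (k-j).factorial)))
        * descPochhammer ℝ j).natDegree + ((descPochhammer ℝ (k-j)).comp
          (Polynomial.C (n:ℝ) - X)).natDegree := Polynomial.natDegree_mul_le
    _ ≤ ((Polynomial.C ((-1:ℝ)^j * (1 / (j.factorial * (k-j).factorial)))).natDegree
        + (descPochhammer ℝ j).natDegree) + (descPochhammer ℝ (k-j)).natDegree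
          * (Polynomial.C (n:ℝ) - X).natDegree := by
        gcongr
        · exact Polynomial.natDegree_mul_le
        · exact Polynomial.natDegree_comp_le
    _ ≤ (0 + j) + (k - j) * 1 := by
        gcongr
        · exact le_of_eq (Polynomial.natDegree_C _)
        · exact le_of_eq (descPochhammer_natDegree (R := ℝ) _)
        · exact le_of_eq (descPochhammer_natDegree (R := ℝ) _)
        · exact le_trans (Polynomial.natDegree_sub_le _ _)
            (by simp [Polynomial.natDegree_X, Polynomial.natDegree_C])
    _ ≤ k := by omega

lemma krawPoly_eval (k m : ℕ) (hm : m ≤ n) :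
    (krawPoly n k).eval (m : ℝ) = kraw n k m := by
  rw [kraw_eq k m hm, krawPoly, Polynomial.eval_finset_sum]
  apply Finset.sum_congr rfl
  intro j _
  rw [Polynomial.eval_mul, Polynomial.eval_mul, Polynomial.eval_C, Polynomial.eval_comp,
    Polynomial.eval_sub, Polynomial.eval_C, Polynomial.eval_X,
    show ((n:ℝ) - (m:ℝ)) = ((n - m : ℕ) : ℝ) by
      rw [Nat.cast_sub hm],
    descPochhammer_eval_eq_descFactorial, descPochhammer_eval_eq_descFactorial,
    Nat.descFactorial_eq_factorial_mul_choose, Nat.descFactorial_eq_factorial_mul_choose]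
  have h1 : (j.factorial : ℝ) ≠ 0 := Nat.cast_ne_zero.mpr (Nat.factorial_ne_zero j)
  have h2 : ((k-j).factorial : ℝ) ≠ 0 := Nat.cast_ne_zero.mpr (Nat.factorial_ne_zero (k-j))
  push_cast
  field_simp

lemma middle_decomp (f : (Fin n → Bool) → Bool)
    (hf : ∀ x y, hammingWeight x = hammingWeight y → f x = f y)
    (D : ℕ) (hD1 : 1 ≤ D) (hD2 : 2 * D ≤ n)
    (hmid : ∀ j, D ≤ j → j ≤ n - D → fourierCoeff f (xvec n j) = 0) :
    ∃ P Q : ℝ[X], P.natDegree < D ∧ Q.natDegree < D ∧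
      ∀ m : ℕ, m ≤ n →
        boolToReal (f (xvec n m)) = P.eval (m:ℝ) + (-1:ℝ)^m * Q.eval (m:ℝ) := by
  refine ⟨∑ j ∈ Finset.range D, Polynomial.C (fourierCoeff f (xvec n j)) * krawPoly n j,
    ∑ j ∈ Finset.range D, Polynomial.C (fourierCoeff f (xvec n (n - j))) * krawPoly n j,
    ?_, ?_, ?_⟩
  · have hle : (∑ j ∈ Finset.range D,
        Polynomial.C (fourierCoeff f (xvec n j)) * krawPoly n j).natDegree ≤ D - 1 := by
      apply Polynomial.natDegree_sum_le_of_forall_le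
      intro j hj
      refine le_trans Polynomial.natDegree_mul_le ?_
      rw [Polynomial.natDegree_C, zero_add]
      exact le_trans (krawPoly_natDegree_le j) (by
        have := Finset.mem_range.mp hj; omega)
    omega
  · have hle : (∑ j ∈ Finset.range D,
        Polynomial.C (fourierCoeff f (xvec n (n - j))) * krawPoly n j).natDegree ≤ D - 1 := by
      apply Polynomial.natDegree_sum_le_of_forall_le
      intro j hj
      refine le_trans Polynomial.natDegree_mul_le ?_
      rw [Polynomial.natDegree_C, zero_add]
      exact le_trans (krawPoly_natDegree_le j) (by
        have := Finset.mem_range.mp hj; omega)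
    omega
  · intro m hm
    rw [decomp f hf m hm]
    have hsplit : Finset.range (n+1) = Finset.range D ∪ Finset.Ico D (n+1) := by
      rw [Finset.range_eq_Ico, Finset.range_eq_Ico, Finset.Ico_union_Ico_eq_Ico (by omega) (by omega)]
    have hsplit2 : Finset.Ico D (n+1) = Finset.Ico D (n-D+1) ∪ Finset.Ico (n-D+1) (n+1) := by
      rw [Finset.Ico_union_Ico_eq_Ico (by omega) (by omega)]
    rw [hsplit, Finset.sum_union (by
      rw [Finset.range_eq_Ico]; exact Finset.Ico_disjoint_Ico_consecutive 0 D (n+1)),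
      hsplit2, Finset.sum_union (Finset.Ico_disjoint_Ico_consecutive _ _ _)]
    have hmid0 : ∑ j ∈ Finset.Ico D (n-D+1), fourierCoeff f (xvec n j) * kraw n j m = 0 := by
      apply Finset.sum_eq_zero
      intro j hj
      rw [Finset.mem_Ico] at hj
      rw [hmid j hj.1 (by omega), zero_mul]
    have hhigh : ∑ j ∈ Finset.Ico (n-D+1) (n+1), fourierCoeff f (xvec n j) * kraw n j m
        = (-1:ℝ)^m * ∑ j ∈ Finset.range D,
            fourierCoeff f (xvec n (n - j)) * kraw n j m := by
      rw [Finset.mul_sum]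
      apply Finset.sum_nbij' (i := fun j => n - j) (j := fun j => n - j)
      · intro j hj
        rw [Finset.mem_Ico] at hj
        rw [Finset.mem_range]
        omega
      · intro j hj
        rw [Finset.mem_range] at hj
        rw [Finset.mem_Ico]
        omega
      · intro j hj
        rw [Finset.mem_Ico] at hj
        omega
      · intro j hj
        rw [Finset.mem_range] at hj
        omega
      · intro j hj
        rw [Finset.mem_Ico] at hj
        have hjn : j ≤ n := by omega
        have h1 : n - (n - j) = j := by omega
        have h2 := kraw_compl (n - j) m (by omega) hm
        rw [h1] at h2
        rw [h1, h2]
        ring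
    rw [hmid0, hhigh, zero_add, Polynomial.eval_finset_sum, Polynomial.eval_finset_sum]
    rw [Finset.mul_sum, Finset.mul_sum]
    congr 1
    · apply Finset.sum_congr rfl
      intro j hj
      rw [Polynomial.eval_mul, Polynomial.eval_C,
        krawPoly_eval j m hm]
    · apply Finset.sum_congr rfl
      intro j hj
      rw [Polynomial.eval_mul, Polynomial.eval_C, krawPoly_eval j m hm]

lemma poly_const_of_bool (P : ℝ[X]) (s : Finset ℕ)
    (hs : ∀ m ∈ s, P.eval (m:ℝ) = 0 ∨ P.eval (m:ℝ) = 1)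
    (hcard : 2 * P.natDegree < s.card) :
    (∀ m : ℕ, P.eval (m:ℝ) = 0) ∨ (∀ m : ℕ, P.eval (m:ℝ) = 1) := by
  have hzero : P * (P - 1) = 0 := by
    apply Polynomial.eq_zero_of_natDegree_lt_card_of_eval_eq_zero' (P * (P - 1))
      (s.image (fun m : ℕ => (m : ℝ)))
    · intro x hx
      obtain ⟨m, hm, rfl⟩ := Finset.mem_image.mp hx
      rcases hs m hm with h | h <;> simp [h]
    · refine lt_of_le_of_lt ?_ (lt_of_lt_of_le hcard
        (le_of_eq (Finset.card_image_of_injective s Nat.cast_injective).symm))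
      refine le_trans (Polynomial.natDegree_mul_le) ?_
      have : (P - 1).natDegree ≤ P.natDegree := by
        refine le_trans (Polynomial.natDegree_sub_le _ _) ?_
        simp
      omega
  rcases mul_eq_zero.mp hzero with h | h
  · left; intro m; rw [h]; simp
  · right; intro m
    rw [sub_eq_zero.mp h]; simp

lemma choose_mono_half {a b : ℕ} (hab : a ≤ b) (hb : b ≤ n / 2) :
    n.choose a ≤ n.choose b := by
  induction b, hab using Nat.le_induction with
  | base => exact le_refl _
  | succ b hb' ih =>
    exact le_trans (ih (by omega)) (Nat.choose_le_succ_of_lt_half_left (by omega))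

lemma choose_middle_ge {D k : ℕ} (h1 : D ≤ k) (h2 : k ≤ n - D) :
    n.choose D ≤ n.choose k := by
  have hkn : k ≤ n := by omega
  rcases le_or_gt k (n / 2) with h | h
  · exact choose_mono_half h1 h
  · rw [← Nat.choose_symm hkn]
    exact choose_mono_half (by omega) (by omega)

lemma support_ge (f : (Fin n → Bool) → Bool)
    (hf : ∀ x y, hammingWeight x = hammingWeight y → f x = f y)
    (k : ℕ) (hk : k ≤ n) (hne : fourierCoeff f (xvec n k) ≠ 0) :
    n.choose k ≤ Set.ncard {w : Fin n → Bool | fourierCoeff f w ≠ 0} := by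
  have hsub : ↑(Finset.univ.filter fun w : Fin n → Bool => hammingWeight w = k)
      ⊆ {w : Fin n → Bool | fourierCoeff f w ≠ 0} := by
    intro w hw
    simp only [Finset.coe_filter, Set.mem_setOf_eq, Finset.mem_univ, true_and] at hw
    simp only [Set.mem_setOf_eq]
    rw [fourierCoeff_eq_of_weight_eq f hf w (xvec n k)
      (by rw [hw, hammingWeight_xvec k hk])]
    exact hne
  calc n.choose k
      = (Finset.univ.filter fun w : Fin n → Bool => hammingWeight w = k).card :=
        (card_weight_eq k).symm
    _ = Set.ncard ↑(Finset.univ.filter fun w : Fin n → Bool => hammingWeight w = k) :=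
        (Set.ncard_coe_finset _).symm
    _ ≤ _ := Set.ncard_le_ncard hsub (Set.toFinite _)

lemma ceil_div8 (n : ℕ) : ⌈(n : ℝ) / 8⌉₊ = (n + 7) / 8 := by
  rcases Nat.eq_zero_or_pos n with rfl | hn
  · simp
  have hq : 8 * ((n + 7) / 8) ≤ n + 7 ∧ n + 7 < 8 * ((n + 7) / 8) + 8 := by omega
  have hq0 : (n + 7) / 8 ≠ 0 := by omega
  rw [Nat.ceil_eq_iff hq0]
  constructor
  · rw [lt_div_iff₀ (by norm_num : (0:ℝ) < 8)]
    have h2 : 1 ≤ (n + 7) / 8 := by omega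
    rw [Nat.cast_sub h2]
    have h5 : (8 : ℝ) * (((n + 7) / 8 : ℕ) : ℝ) ≤ (n : ℝ) + 7 := by exact_mod_cast hq.1
    push_cast
    linarith
  · rw [div_le_iff₀ (by norm_num : (0:ℝ) < 8)]
    have : (n : ℕ) ≤ 8 * ((n + 7) / 8) := by omega
    calc (n : ℝ) ≤ (8 * ((n + 7) / 8 : ℕ) : ℕ) := by exact_mod_cast this
    _ = ((n + 7) / 8 : ℕ) * 8 := by push_cast; ring


/-- For all sufficiently large `n`, every nontrivial symmetric Boolean
function on `{0,1}^n` has at least `C(n, ⌈n/8⌉)` nonzero Fourier coefficients. -/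
theorem fourier_support_lower_bound :
    ∃ N : ℕ, ∀ n : ℕ, N ≤ n → ∀ f : (Fin n → Bool) → Bool,
      (∀ x y, hammingWeight x = hammingWeight y → f x = f y) →
      f ≠ (fun _ => false) →
      f ≠ (fun _ => true) →
      f ≠ (fun x => decide (hammingWeight x % 2 = 1)) →
      f ≠ (fun x => !decide (hammingWeight x % 2 = 1)) →
      n.choose ⌈(n : ℝ) / 8⌉₊ ≤ Set.ncard {w : Fin n → Bool | fourierCoeff f w ≠ 0} := by
  refine ⟨100, fun n hn f hf h0 h1 hp hp' => ?_⟩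
  rw [ceil_div8]
  set D := (n + 7) / 8 with hD
  have hD1 : 1 ≤ D := by omega
  have hD2 : 2 * D ≤ n := by omega
  by_cases hex : ∃ k, D ≤ k ∧ k ≤ n - D ∧ fourierCoeff f (xvec n k) ≠ 0
  · obtain ⟨k, hk1, hk2, hk3⟩ := hex
    exact le_trans (choose_middle_ge hk1 hk2) (support_ge f hf k (by omega) hk3)
  · exfalso
    push_neg at hex
    obtain ⟨P, Q, hP, hQ, heval⟩ := middle_decomp f hf D hD1 hD2 hex
    have hEf : ∀ m : ℕ, m ≤ n → m % 2 = 0 →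
        boolToReal (f (xvec n m)) = (P + Q).eval (m:ℝ) := by
      intro m hm h2
      rw [heval m hm, Even.neg_one_pow (Nat.even_iff.mpr h2), one_mul, Polynomial.eval_add]
    have hOf : ∀ m : ℕ, m ≤ n → m % 2 = 1 →
        boolToReal (f (xvec n m)) = (P - Q).eval (m:ℝ) := by
      intro m hm h2
      rw [heval m hm, Odd.neg_one_pow (Nat.odd_iff.mpr h2), Polynomial.eval_sub]
      ring
    -- even points
    set sE : Finset ℕ := (Finset.range (n/2+1)).image (fun t => 2*t) with hsE
    have hsEcard : sE.card = n/2 + 1 := by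
      rw [hsE, Finset.card_image_of_injective _ (fun a b hab => by omega), Finset.card_range]
    have hsEmem : ∀ m ∈ sE, m ≤ n ∧ m % 2 = 0 := by
      intro m hm
      rw [hsE, Finset.mem_image] at hm
      obtain ⟨t, ht, rfl⟩ := hm
      rw [Finset.mem_range] at ht
      omega
    have hE := poly_const_of_bool (P + Q) sE
      (fun m hm => by
        obtain ⟨hm1, hm2⟩ := hsEmem m hm
        rw [← hEf m hm1 hm2]
        cases h : f (xvec n m) <;> simp [boolToReal, h])
      (by
        have hd : (P + Q).natDegree ≤ D - 1 :=
          le_trans (Polynomial.natDegree_add_le _ _) (max_le (by omega) (by omega))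
        rw [hsEcard]
        omega)
    -- odd points
    set sO : Finset ℕ := (Finset.range ((n+1)/2)).image (fun t => 2*t+1) with hsO
    have hsOcard : sO.card = (n+1)/2 := by
      rw [hsO, Finset.card_image_of_injective _ (fun a b hab => by omega), Finset.card_range]
    have hsOmem : ∀ m ∈ sO, m ≤ n ∧ m % 2 = 1 := by
      intro m hm
      rw [hsO, Finset.mem_image] at hm
      obtain ⟨t, ht, rfl⟩ := hm
      rw [Finset.mem_range] at ht
      omega
    have hO := poly_const_of_bool (P - Q) sO
      (fun m hm => by
        obtain ⟨hm1, hm2⟩ := hsOmem m hm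
        rw [← hOf m hm1 hm2]
        cases h : f (xvec n m) <;> simp [boolToReal, h])
      (by
        have hd : (P - Q).natDegree ≤ D - 1 :=
          le_trans (Polynomial.natDegree_sub_le _ _) (max_le (by omega) (by omega))
        rw [hsOcard]
        omega)
    -- conclude f is trivial
    have b0 : ∀ b : Bool, boolToReal b = 0 → b = false := by
      intro b
      cases b <;> simp [boolToReal]
    have b1 : ∀ b : Bool, boolToReal b = 1 → b = true := by
      intro b
      cases b <;> simp [boolToReal]
    have hval : ∀ x : Fin n → Bool, f x = f (xvec n (hammingWeight x)) := fun x =>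
      hf x _ (hammingWeight_xvec _ (hammingWeight_le x)).symm
    have hEb : ∀ m : ℕ, m ≤ n → m % 2 = 0 → ∀ r : ℝ,
        (∀ j : ℕ, (P+Q).eval (j:ℝ) = r) → boolToReal (f (xvec n m)) = r := by
      intro m hm h2 r hr
      rw [hEf m hm h2, hr m]
    have hOb : ∀ m : ℕ, m ≤ n → m % 2 = 1 → ∀ r : ℝ,
        (∀ j : ℕ, (P-Q).eval (j:ℝ) = r) → boolToReal (f (xvec n m)) = r := by
      intro m hm h2 r hr
      rw [hOf m hm h2, hr m]
    rcases hE with hE | hE <;> rcases hO with hO | hO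
    · apply h0
      funext x
      rw [hval x]
      have hm := hammingWeight_le x
      rcases Nat.mod_two_eq_zero_or_one (hammingWeight x) with h2 | h2
      · exact b0 _ (hEb _ hm h2 0 hE)
      · exact b0 _ (hOb _ hm h2 0 hO)
    · apply hp
      funext x
      rw [hval x]
      have hm := hammingWeight_le x
      rcases Nat.mod_two_eq_zero_or_one (hammingWeight x) with h2 | h2
      · rw [b0 _ (hEb _ hm h2 0 hE)]
        simp [h2]
      · rw [b1 _ (hOb _ hm h2 1 hO)]
        simp [h2]
    · apply hp'
      funext x
      rw [hval x]
      have hm := hammingWeight_le x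
      rcases Nat.mod_two_eq_zero_or_one (hammingWeight x) with h2 | h2
      · rw [b1 _ (hEb _ hm h2 1 hE)]
        simp [h2]
      · rw [b0 _ (hOb _ hm h2 0 hO)]
        simp [h2]
    · apply h1
      funext x
      rw [hval x]
      have hm := hammingWeight_le x
      rcases Nat.mod_two_eq_zero_or_one (hammingWeight x) with h2 | h2
      · exact b1 _ (hEb _ hm h2 1 hE)
      · exact b1 _ (hOb _ hm h2 1 hO)

end SymXOR
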